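/- Let U : ℝ³ → ℝ be continuous and nonnegative with U(y) ≤ C(1+|y|)⁻⁷ for all y, for some constant C > 0, let v(x) = ∫_{ℝ³} |x−y| U(y) dy and α = ∫_{ℝ³} U(y) dy. Then for every x ≠ 0, |x| · | (x/|x|)·∇v(x) − α | ≤ 2 ∫_{ℝ³} |y| U(y) dy. -/

import Mathlib

open MeasureTheory Filter Metric

noncomputable section

abbrev E3 := EuclideanSpace ℝ (Fin 3)

/-- The radial derivative ∂_r f = (x/|x|)·∇f. -/
def radDeriv (f : E3 → ℝ) (x : E3) : ℝ := inner ℝ (‖x‖⁻¹ • x) (gradient f x)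

open RealInnerProductSpace in
lemma norm_hasFDerivAt {z : E3} (hz : z ≠ 0) :
    HasFDerivAt (fun w : E3 => ‖w‖) (innerSL ℝ (‖z‖⁻¹ • z)) z := by
  have hz' : (0 : ℝ) < ‖z‖ := norm_pos_iff.mpr hz
  have h1 := ((hasFDerivAt_id z).inner ℝ (hasFDerivAt_id z))
  have hz2 : (⟪(id z : E3), (id z : E3)⟫ : ℝ) ≠ 0 := by
    rw [id_eq, real_inner_self_eq_norm_mul_norm]
    exact (mul_pos hz' hz').ne'
  have h2 := (h1.sqrt hz2).congr_of_eventuallyEq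
    (Filter.Eventually.of_forall (fun w : E3 => by
      show ‖w‖ = Real.sqrt ⟪(id w : E3), (id w : E3)⟫
      rw [id_eq, real_inner_self_eq_norm_mul_norm, Real.sqrt_mul_self (norm_nonneg w)]))
  have hD : ((1 / (2 * Real.sqrt ⟪(id z : E3), (id z : E3)⟫)) •
      ((fderivInnerCLM ℝ ((id z : E3), (id z : E3))).comp
        ((ContinuousLinearMap.id ℝ E3).prod (ContinuousLinearMap.id ℝ E3))))
      = innerSL ℝ (‖z‖⁻¹ • z) := by
    apply ContinuousLinearMap.ext
    intro w
    simp only [id_eq, ContinuousLinearMap.smul_apply, ContinuousLinearMap.comp_apply,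
      ContinuousLinearMap.prod_apply, ContinuousLinearMap.id_apply, fderivInnerCLM_apply,
      innerSL_apply_apply, smul_eq_mul]
    rw [real_inner_self_eq_norm_mul_norm, Real.sqrt_mul_self (norm_nonneg z),
      real_inner_smul_left, real_inner_comm w z]
    field_simp
    try ring
  rw [hD] at h2
  exact h2

open RealInnerProductSpace in
lemma key_ptwise (x y : E3) : |(⟪x, ‖x - y‖⁻¹ • (x - y)⟫ : ℝ) - ‖x‖| ≤ 2 * ‖y‖ := by
  by_cases hxy : x = y
  · subst hxy
    simp [abs_of_nonneg (norm_nonneg x), two_mul, le_add_iff_nonneg_left, norm_nonneg]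
  · set z := x - y with hzdef
    have hz : z ≠ 0 := sub_ne_zero.mpr hxy
    have hz' : (0 : ℝ) < ‖z‖ := norm_pos_iff.mpr hz
    have hx_eq : x = y + z := by rw [hzdef]; abel
    have hsplit : (⟪x, ‖z‖⁻¹ • z⟫ : ℝ) - ‖x‖ = ‖z‖⁻¹ * ⟪y, z⟫ + (‖z‖ - ‖x‖) := by
      rw [real_inner_smul_right]
      nth_rewrite 1 [hx_eq]
      rw [inner_add_left, real_inner_self_eq_norm_mul_norm]
      field_simp
      try ring
    rw [hsplit]
    have h1 : |‖z‖⁻¹ * ⟪y, z⟫| ≤ ‖y‖ := by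
      rw [abs_mul, abs_of_nonneg (inv_nonneg.mpr (norm_nonneg z))]
      calc ‖z‖⁻¹ * |⟪y, z⟫| ≤ ‖z‖⁻¹ * (‖y‖ * ‖z‖) := by
            gcongr
            exact abs_real_inner_le_norm y z
        _ = ‖y‖ := by field_simp
    have h2 : |‖z‖ - ‖x‖| ≤ ‖y‖ := by
      have := abs_norm_sub_norm_le z x
      have hxz : z - x = -y := by rw [hzdef]; abel
      rw [← norm_neg y, ← hxz]
      exact (abs_sub_comm ‖x‖ ‖z‖ ▸ this)
    calc |‖z‖⁻¹ * ⟪y, z⟫ + (‖z‖ - ‖x‖)| ≤ |‖z‖⁻¹ * ⟪y, z⟫| + |‖z‖ - ‖x‖| := abs_add_le _ _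
      _ ≤ ‖y‖ + ‖y‖ := add_le_add h1 h2
      _ = 2 * ‖y‖ := by ring

theorem stmt_15 (C : ℝ) (hC : 0 < C) (U : E3 → ℝ)
    (hUcont : Continuous U) (hUnonneg : ∀ y, 0 ≤ U y)
    (hUbound : ∀ y, U y ≤ C / (1 + ‖y‖) ^ 7)
    (v : E3 → ℝ) (hv : ∀ x, v x = ∫ y, ‖x - y‖ * U y)
    (α : ℝ) (hα : α = ∫ y, U y) :
    ∀ x : E3, x ≠ 0 → ‖x‖ * |radDeriv v x - α| ≤ 2 * ∫ y, ‖y‖ * U y := by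
  intro x hx
  have hxn : (0 : ℝ) < ‖x‖ := norm_pos_iff.mpr hx
  -- basic positivity of 1 + ‖y‖
  have hpos : ∀ y : E3, (0 : ℝ) < 1 + ‖y‖ := fun y => by positivity
  -- integrability of U
  have hint7 : Integrable (fun y : E3 => (1 + ‖y‖) ^ (-(7:ℝ))) :=
    integrable_one_add_norm (by simp [finrank_euclideanSpace]; norm_num)
  have hU_int : Integrable U := by
    refine (hint7.const_mul C).mono' hUcont.aestronglyMeasurable
      (Filter.Eventually.of_forall fun y => ?_)
    rw [Real.norm_eq_abs, abs_of_nonneg (hUnonneg y)]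
    calc U y ≤ C / (1 + ‖y‖) ^ 7 := hUbound y
      _ = C * (1 + ‖y‖) ^ (-(7:ℝ)) := by
          rw [Real.rpow_neg (hpos y).le, ← Real.rpow_natCast (1 + ‖y‖) 7]
          norm_num [div_eq_mul_inv]
  have hint6 : Integrable (fun y : E3 => (1 + ‖y‖) ^ (-(6:ℝ))) :=
    integrable_one_add_norm (by simp [finrank_euclideanSpace]; norm_num)
  have hU1_int : Integrable (fun y : E3 => ‖y‖ * U y) := by
    refine (hint6.const_mul C).mono'
      (continuous_norm.mul hUcont).aestronglyMeasurable
      (Filter.Eventually.of_forall fun y => ?_)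
    rw [Real.norm_eq_abs, abs_of_nonneg (mul_nonneg (norm_nonneg y) (hUnonneg y))]
    calc ‖y‖ * U y ≤ (1 + ‖y‖) * (C / (1 + ‖y‖) ^ 7) := by
          apply mul_le_mul (by linarith [norm_nonneg y]) (hUbound y) (hUnonneg y)
            (hpos y).le
      _ = C * (1 + ‖y‖) ^ (-(6:ℝ)) := by
          rw [Real.rpow_neg (hpos y).le, show ((1 + ‖y‖):ℝ) ^ (6:ℝ) = (1 + ‖y‖) ^ (6:ℕ) from by
            rw [← Real.rpow_natCast (1 + ‖y‖) 6]; norm_num]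
          have hne : (1 + ‖y‖) ≠ 0 := (hpos y).ne'
          field_simp
  -- the vector field
  set g : E3 → E3 := fun y => U y • (‖x - y‖⁻¹ • (x - y)) with hg
  have hg_norm : ∀ y, ‖g y‖ ≤ U y := by
    intro y
    rw [hg]
    simp only [norm_smul, Real.norm_eq_abs, abs_of_nonneg (hUnonneg y)]
    by_cases h : x - y = 0
    · simp [h, hUnonneg y]
    · have : ‖x - y‖ > 0 := norm_pos_iff.mpr h
      rw [abs_of_nonneg (inv_nonneg.mpr (norm_nonneg _)), inv_mul_cancel₀ this.ne',
        mul_one]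
  have hg_meas0 : Measurable g := by
    apply (hUcont.measurable).smul
    apply Measurable.smul (f := fun y => ‖x - y‖⁻¹) (g := fun y => x - y)
    · exact (measurable_norm.comp (measurable_const.sub measurable_id)).inv
    · exact measurable_const.sub measurable_id
  have hg_meas : AEStronglyMeasurable g volume := hg_meas0.aestronglyMeasurable
  have hg_int : Integrable g := by
    refine hU_int.mono' hg_meas (Filter.Eventually.of_forall fun y => ?_)
    exact hg_norm y
  -- differentiation under the integral sign
  have hderiv : HasFDerivAt (fun x' : E3 => ∫ y, ‖x' - y‖ * U y)
      (∫ y, innerSL ℝ (g y)) x := by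
    have hae : ∀ᵐ y : E3, y ≠ x := by
      rw [MeasureTheory.ae_iff]
      simpa using MeasureTheory.measure_singleton x
    have := hasFDerivAt_integral_of_dominated_loc_of_lip'
      (F := fun x' (y : E3) => ‖x' - y‖ * U y)
      (F' := fun y => innerSL ℝ (g y)) (bound := U) (x₀ := x) (μ := volume)
      (s := Metric.ball x 1) (Metric.ball_mem_nhds x one_pos)
      (fun x' _ => ((continuous_const.sub continuous_id).norm.mul
        hUcont).aestronglyMeasurable)
      ?_ ?_ ?_ hU_int ?_
    · exact this.2
    · -- integrability of F x₀
      refine ((hU_int.const_mul ‖x‖).add hU1_int).mono'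
        ((continuous_const.sub continuous_id).norm.mul hUcont).aestronglyMeasurable
        (Filter.Eventually.of_forall fun y => ?_)
      rw [Real.norm_eq_abs, abs_of_nonneg (mul_nonneg (norm_nonneg _) (hUnonneg y))]
      calc ‖x - y‖ * U y ≤ (‖x‖ + ‖y‖) * U y :=
            mul_le_mul_of_nonneg_right (norm_sub_le x y) (hUnonneg y)
        _ = ‖x‖ * U y + ‖y‖ * U y := by ring
    · -- measurability of F'
      exact ((innerSL ℝ (E := E3)).continuous.measurable.comp
        hg_meas0).aestronglyMeasurable
    · -- Lipschitz bound
      refine Filter.Eventually.of_forall fun y => fun x' _ => ?_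
      rw [← sub_mul, Real.norm_eq_abs, abs_mul, abs_of_nonneg (hUnonneg y), mul_comm]
      apply mul_le_mul_of_nonneg_left _ (hUnonneg y)
      calc |‖x' - y‖ - ‖x - y‖| ≤ ‖(x' - y) - (x - y)‖ := abs_norm_sub_norm_le _ _
        _ = ‖x' - x‖ := by congr 1; abel
    · -- a.e. differentiability
      filter_upwards [hae] with y hy
      have hz : x - y ≠ 0 := sub_ne_zero.mpr (Ne.symm hy)
      have h1 : HasFDerivAt (fun x' : E3 => ‖x' - y‖)
          (innerSL ℝ (‖x - y‖⁻¹ • (x - y))) x := by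
        have := (norm_hasFDerivAt hz).comp x ((hasFDerivAt_id x).sub_const y)
        simpa [Function.comp_def] using this
      have h2 := h1.mul_const (U y)
      have : (U y • innerSL ℝ (‖x - y‖⁻¹ • (x - y))) = innerSL ℝ (g y) := by
        simp only [hg, _root_.map_smul]
      rw [this] at h2
      exact h2
  -- identify the gradient
  have hint_clm : (∫ y, innerSL ℝ (g y)) = innerSL ℝ (∫ y, g y) :=
    ContinuousLinearMap.integral_comp_comm _ hg_int
  have hgrad : HasGradientAt v (∫ y, g y) x := by
    rw [hasGradientAt_iff_hasFDerivAt]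
    have hfun : v = fun x' : E3 => ∫ y, ‖x' - y‖ * U y := funext hv
    have : (InnerProductSpace.toDual ℝ E3 (∫ y, g y) : E3 →L[ℝ] ℝ)
        = innerSL ℝ (∫ y, g y) := by
      apply ContinuousLinearMap.ext
      intro w
      simp [InnerProductSpace.toDual_apply_apply]
    rw [this, hfun, ← hint_clm]
    exact hderiv
  have hgrad' : gradient v x = ∫ y, g y := hgrad.gradient
  -- compute radDeriv
  have hrad : ‖x‖ * radDeriv v x = ∫ y, (inner ℝ x (‖x - y‖⁻¹ • (x - y)) : ℝ) * U y := by
    rw [radDeriv, hgrad', real_inner_smul_left, ← mul_assoc,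
      mul_inv_cancel₀ hxn.ne', one_mul, ← integral_inner hg_int x]
    congr 1
    funext y
    simp only [hg, real_inner_smul_right]
    ring
  -- integrability of the inner-product integrand
  have hinner_int : Integrable (fun y => (inner ℝ x (‖x - y‖⁻¹ • (x - y)) : ℝ) * U y) := by
    refine (hU_int.const_mul ‖x‖).mono' ?_ (Filter.Eventually.of_forall fun y => ?_)
    · have : (fun y => (inner ℝ x (‖x - y‖⁻¹ • (x - y)) : ℝ) * U y)
          = fun y => (inner ℝ x (g y) : ℝ) := by
        funext y
        simp only [hg, real_inner_smul_right]
        ring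
      rw [this]
      exact hg_int.const_inner x |>.aestronglyMeasurable
    · rw [Real.norm_eq_abs, abs_mul, abs_of_nonneg (hUnonneg y)]
      apply mul_le_mul_of_nonneg_right _ (hUnonneg y)
      calc |(inner ℝ x (‖x - y‖⁻¹ • (x - y)) : ℝ)| ≤ ‖x‖ * ‖‖x - y‖⁻¹ • (x - y)‖ :=
            abs_real_inner_le_norm _ _
        _ ≤ ‖x‖ * 1 := by
            gcongr
            by_cases h : x - y = 0
            · simp [h]
            · rw [norm_smul, Real.norm_eq_abs,
                abs_of_nonneg (inv_nonneg.mpr (norm_nonneg _)),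
                inv_mul_cancel₀ (norm_pos_iff.mpr h).ne']
        _ = ‖x‖ := mul_one _
  -- main estimate
  have hxU_int : Integrable (fun y => ‖x‖ * U y) := hU_int.const_mul ‖x‖
  rw [← abs_of_nonneg hxn.le, ← abs_mul, mul_sub, hrad, hα, ← integral_const_mul (‖x‖),
    ← integral_sub hinner_int hxU_int]
  have h2int : Integrable (fun y : E3 => 2 * ‖y‖ * U y) := by
    have := hU1_int.const_mul 2
    simpa [mul_assoc] using this
  calc |∫ y, ((inner ℝ x (‖x - y‖⁻¹ • (x - y)) : ℝ) * U y - ‖x‖ * U y)|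
      ≤ ∫ y, |(inner ℝ x (‖x - y‖⁻¹ • (x - y)) : ℝ) * U y - ‖x‖ * U y| := by
        simpa [Real.norm_eq_abs] using
          norm_integral_le_integral_norm
            (fun y => (inner ℝ x (‖x - y‖⁻¹ • (x - y)) : ℝ) * U y - ‖x‖ * U y)
    _ ≤ ∫ y, 2 * ‖y‖ * U y := by
        apply integral_mono (hinner_int.sub hxU_int).abs h2int
        intro y
        simp only [Pi.sub_apply]
        have : (inner ℝ x (‖x - y‖⁻¹ • (x - y)) : ℝ) * U y - ‖x‖ * U y
            = ((inner ℝ x (‖x - y‖⁻¹ • (x - y)) : ℝ) - ‖x‖) * U y := by ring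
        rw [this, abs_mul, abs_of_nonneg (hUnonneg y)]
        exact mul_le_mul_of_nonneg_right (key_ptwise x y) (hUnonneg y)
    _ = 2 * ∫ y, ‖y‖ * U y := by
        rw [← integral_const_mul]
        congr 1
        funext y
        ring
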